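/- arXiv:2012.11877 — 3 statements merged into one kernel-verified Lean document; each statement's English description precedes it below -/
import Mathlib

section
/- For natural numbers k ≤ n - m and m ≤ n with n ≥ 1, the ratio of binomial coefficients C(n-m, k) / C(n, k) is at most exp(-k·m/n). -/
open Finset in
/-- For `k ≤ n - m`, `m ≤ n`, `n ≥ 1`, the ratio `C(n-m,k) / C(n,k)` is at most
`exp (-(k m / n))`. -/
theorem choose_ratio_le_exp (n m k : ℕ) (hn : 1 ≤ n) (hm : m ≤ n) (hk : k ≤ n - m) :
    ((n - m).choose k : ℝ) / (n.choose k : ℝ) ≤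
      Real.exp (-((k : ℝ) * (m : ℝ) / (n : ℝ))) := by
  have hnpos : (0:ℝ) < n := by exact_mod_cast hn
  have hfac : (0:ℝ) < (Nat.factorial k : ℝ) := by exact_mod_cast k.factorial_pos
  have hcpos : (0:ℝ) < (n.choose k : ℝ) := by
    exact_mod_cast Nat.choose_pos (le_trans hk (Nat.sub_le n m))
  -- rewrite ratio as ratio of descending factorials
  have hdesc : ((n - m).choose k : ℝ) / (n.choose k : ℝ)
      = ((n - m).descFactorial k : ℝ) / (n.descFactorial k : ℝ) := by
    rw [Nat.descFactorial_eq_factorial_mul_choose, Nat.descFactorial_eq_factorial_mul_choose]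
    push_cast
    rw [mul_div_mul_left _ _ (ne_of_gt hfac)]
  rw [hdesc, Nat.descFactorial_eq_prod_range, Nat.descFactorial_eq_prod_range]
  push_cast
  rw [← Finset.prod_div_distrib]
  have hbound : ∀ i ∈ range k, ((↑(n - m - i) : ℝ)) / (↑(n - i) : ℝ)
      ≤ Real.exp (-((m:ℝ)/(n:ℝ))) := by
    intro i hi
    have hik : i < k := Finset.mem_range.mp hi
    have hin : i < n := lt_of_lt_of_le hik (le_trans hk (Nat.sub_le n m))
    have hnipos : (0:ℝ) < (↑(n - i) : ℝ) := by
      have : 0 < n - i := Nat.sub_pos_of_lt hin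
      exact_mod_cast this
    have h1 : ((↑(n - m - i) : ℝ)) / (↑(n - i) : ℝ) ≤ 1 - (m:ℝ)/(n:ℝ) := by
      rw [div_le_iff₀ hnipos]
      have hcast1 : (↑(n - m - i) : ℝ) = (n:ℝ) - m - i := by
        have : i ≤ n - m := le_of_lt (lt_of_lt_of_le hik hk)
        have h2 : m ≤ n := hm
        push_cast [Nat.cast_sub this, Nat.cast_sub h2]
        ring
      have hcast2 : (↑(n - i) : ℝ) = (n:ℝ) - i := by
        push_cast [Nat.cast_sub (le_of_lt hin)]; ring
      rw [hcast1, hcast2]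
      have hmul : (m:ℝ)/(n:ℝ) * (n:ℝ) = (m:ℝ) := div_mul_cancel₀ _ (ne_of_gt hnpos)
      have hnonneg : (0:ℝ) ≤ (m:ℝ)/(n:ℝ) * (i:ℝ) := by positivity
      nlinarith
    calc ((↑(n - m - i) : ℝ)) / (↑(n - i) : ℝ) ≤ 1 - (m:ℝ)/(n:ℝ) := h1
      _ ≤ Real.exp (-((m:ℝ)/(n:ℝ))) := by
          have := Real.add_one_le_exp (-((m:ℝ)/(n:ℝ)))
          linarith
  calc (∏ i ∈ range k, ((↑(n - m - i) : ℝ)) / (↑(n - i) : ℝ))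
      ≤ ∏ _i ∈ range k, Real.exp (-((m:ℝ)/(n:ℝ))) := by
        apply Finset.prod_le_prod
        · intro i _
          positivity
        · exact hbound
    _ = Real.exp (-((k : ℝ) * (m : ℝ) / (n : ℝ))) := by
        rw [Finset.prod_const, ← Real.exp_nat_mul, Finset.card_range]
        ring_nf
end

section
/- Let X be Binomial(d, q) and let f : ℕ → ℝ be given by f(k) = exp(-k·y) for a constant y > 0. Then E[f(X)] ≤ exp(-d·q/8) + exp(-d·q·y/2). -/
/-- For `X ~ Binomial(d, q)` and `f k = exp (-(k y))` with `y > 0`,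
`E[f(X)] ≤ exp (-(d q / 8)) + exp (-(d q y / 2))`. -/
theorem binomial_expectation_exp_le (d : ℕ) (q y : ℝ)
    (hq0 : 0 < q) (hq1 : q ≤ 1) (hy : 0 < y) :
    (∑ k ∈ Finset.range (d + 1),
        (d.choose k : ℝ) * q ^ k * (1 - q) ^ (d - k) * Real.exp (-((k : ℝ) * y)))
      ≤ Real.exp (-((d : ℝ) * q / 8)) + Real.exp (-((d : ℝ) * q * y / 2)) := by
  set L := Real.log 2 with hLdef
  have hL2 : L ≤ 3/4 := le_of_lt (lt_of_lt_of_le Real.log_two_lt_d9 (by norm_num))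
  have hLpos : 0 < L := Real.log_pos (by norm_num)
  have hpmf_nonneg : ∀ k : ℕ, 0 ≤ (d.choose k : ℝ) * q ^ k * (1 - q) ^ (d - k) := by
    intro k
    have h1 : (0:ℝ) ≤ 1 - q := by linarith
    positivity
  -- Pointwise bound
  have hpoint : ∀ k ∈ Finset.range (d + 1),
      (d.choose k : ℝ) * q ^ k * (1 - q) ^ (d - k) * Real.exp (-((k : ℝ) * y))
      ≤ (d.choose k : ℝ) * q ^ k * (1 - q) ^ (d - k) *
          (Real.exp (((d : ℝ) * q / 2 - k) * L) + Real.exp (-((d : ℝ) * q * y / 2))) := by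
    intro k _
    apply mul_le_mul_of_nonneg_left _ (hpmf_nonneg k)
    rcases le_or_gt (k : ℝ) ((d : ℝ) * q / 2) with hk | hk
    · have h1 : Real.exp (-((k : ℝ) * y)) ≤ 1 := by
        apply Real.exp_le_one_iff.mpr
        have : (0:ℝ) ≤ (k : ℝ) * y := by positivity
        linarith
      have h2 : (1:ℝ) ≤ Real.exp (((d : ℝ) * q / 2 - k) * L) := by
        apply Real.one_le_exp
        have : (0:ℝ) ≤ (d : ℝ) * q / 2 - k := by linarith
        positivity
      have h3 : (0:ℝ) ≤ Real.exp (-((d : ℝ) * q * y / 2)) := (Real.exp_pos _).le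
      linarith
    · have h1 : Real.exp (-((k : ℝ) * y)) ≤ Real.exp (-((d : ℝ) * q * y / 2)) := by
        apply Real.exp_le_exp.mpr
        nlinarith
      have h2 : (0:ℝ) ≤ Real.exp (((d : ℝ) * q / 2 - k) * L) := (Real.exp_pos _).le
      linarith
  refine le_trans (Finset.sum_le_sum hpoint) ?_
  have hsplit : (∑ k ∈ Finset.range (d + 1),
      (d.choose k : ℝ) * q ^ k * (1 - q) ^ (d - k) *
        (Real.exp (((d : ℝ) * q / 2 - k) * L) + Real.exp (-((d : ℝ) * q * y / 2))))
      = Real.exp ((d : ℝ) * q / 2 * L) * (1 - q / 2) ^ d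
        + Real.exp (-((d : ℝ) * q * y / 2)) := by
    have e1 : (∑ k ∈ Finset.range (d + 1),
        (d.choose k : ℝ) * q ^ k * (1 - q) ^ (d - k) * Real.exp (((d : ℝ) * q / 2 - k) * L))
        = Real.exp ((d : ℝ) * q / 2 * L) * (1 - q / 2) ^ d := by
      have hb : (q / 2 + (1 - q)) ^ d
          = ∑ k ∈ Finset.range (d + 1), (q/2) ^ k * (1 - q) ^ (d - k) * (d.choose k : ℝ) :=
        add_pow (q/2) (1-q) d
      have : ∀ k ∈ Finset.range (d+1),
          (d.choose k : ℝ) * q ^ k * (1 - q) ^ (d - k) * Real.exp (((d : ℝ) * q / 2 - k) * L)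
          = Real.exp ((d : ℝ) * q / 2 * L) * ((q/2) ^ k * (1 - q) ^ (d - k) * (d.choose k : ℝ)) := by
        intro k _
        have hexp : Real.exp (((d : ℝ) * q / 2 - k) * L)
            = Real.exp ((d : ℝ) * q / 2 * L) * (1/2 : ℝ) ^ k := by
          have h2 : Real.exp (-L) = 1/2 := by
            rw [Real.exp_neg, hLdef, Real.exp_log (by norm_num : (0:ℝ) < 2)]
            norm_num
          have : Real.exp (((d : ℝ) * q / 2 - k) * L)
              = Real.exp ((d : ℝ) * q / 2 * L) * Real.exp ((k:ℝ) * (-L)) := by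
            rw [← Real.exp_add]; ring_nf
          rw [this, ← h2, ← Real.exp_nat_mul]
        rw [hexp]
        have : (q/2 : ℝ) ^ k = q ^ k * (1/2:ℝ) ^ k := by
          rw [← mul_pow]; ring_nf
        rw [this]; ring
      rw [Finset.sum_congr rfl this, ← Finset.mul_sum, ← hb]
      ring_nf
    have e2 : (∑ k ∈ Finset.range (d + 1),
        (d.choose k : ℝ) * q ^ k * (1 - q) ^ (d - k)) = 1 := by
      have hb : (q + (1 - q)) ^ d
          = ∑ k ∈ Finset.range (d + 1), q ^ k * (1 - q) ^ (d - k) * (d.choose k : ℝ) :=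
        add_pow q (1-q) d
      have : (∑ k ∈ Finset.range (d + 1),
          (d.choose k : ℝ) * q ^ k * (1 - q) ^ (d - k))
          = (q + (1 - q)) ^ d := by
        rw [hb]; apply Finset.sum_congr rfl; intro k _; ring
      rw [this]; norm_num
    calc (∑ k ∈ Finset.range (d + 1),
        (d.choose k : ℝ) * q ^ k * (1 - q) ^ (d - k) *
          (Real.exp (((d : ℝ) * q / 2 - k) * L) + Real.exp (-((d : ℝ) * q * y / 2))))
        = (∑ k ∈ Finset.range (d + 1),
            (d.choose k : ℝ) * q ^ k * (1 - q) ^ (d - k) * Real.exp (((d : ℝ) * q / 2 - k) * L))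
          + (∑ k ∈ Finset.range (d + 1),
            (d.choose k : ℝ) * q ^ k * (1 - q) ^ (d - k)) * Real.exp (-((d : ℝ) * q * y / 2)) := by
          rw [Finset.sum_mul, ← Finset.sum_add_distrib]
          apply Finset.sum_congr rfl; intro k _; ring
      _ = Real.exp ((d : ℝ) * q / 2 * L) * (1 - q / 2) ^ d
          + Real.exp (-((d : ℝ) * q * y / 2)) := by rw [e1, e2, one_mul]
  rw [hsplit]
  have hmain : Real.exp ((d : ℝ) * q / 2 * L) * (1 - q / 2) ^ d
      ≤ Real.exp (-((d : ℝ) * q / 8)) := by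
    have h1 : (0:ℝ) ≤ 1 - q / 2 := by linarith
    have h2 : (1 - q / 2 : ℝ) ≤ Real.exp (-(q/2)) := by
      have := Real.add_one_le_exp (-(q/2))
      linarith
    have h3 : (1 - q / 2 : ℝ) ^ d ≤ Real.exp (-(q/2)) ^ d :=
      pow_le_pow_left₀ h1 h2 d
    have h4 : Real.exp (-(q/2)) ^ d = Real.exp (-(q/2) * d) := by
      rw [← Real.exp_nat_mul]; ring_nf
    calc Real.exp ((d : ℝ) * q / 2 * L) * (1 - q / 2) ^ d
        ≤ Real.exp ((d : ℝ) * q / 2 * L) * Real.exp (-(q/2) * d) := by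
          apply mul_le_mul_of_nonneg_left _ (Real.exp_pos _).le
          rw [← h4]; exact h3
      _ = Real.exp ((d : ℝ) * q / 2 * L + -(q/2) * d) := (Real.exp_add _ _).symm
      _ ≤ Real.exp (-((d : ℝ) * q / 8)) := by
          apply Real.exp_le_exp.mpr
          have hdq : (0:ℝ) ≤ (d : ℝ) * q := by positivity
          nlinarith
  linarith
end

section
/- Let n be a positive integer, θ₀ < θ₁ ≤ n natural numbers, and ε ∈ (0,1). Let X₀, X₁ be probability distributions on {0,...,n} supported on {0,...,θ₀} and {θ₁,...,n} respectively, and M : {0,...,n} → distributions on {0,...,n} a randomized mechanism with induced output distributions Z_i(a) = Σ_b X_i(b)·Pr[M(b) = a]. If TVD(Z₀, Z₁) ≤ 1 - ε, then there exists x ∈ {0,...,n} in the support of X₀ or of X₁ such that Pr[|M(x) - x| ≥ (θ₁ - θ₀)/2] ≥ ε/2. -/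
open Classical Finset

lemma aux_exists_weighted {m : ℕ} (X p : Fin m → ℝ) (hX : ∀ b, 0 ≤ X b)
    (h1 : ∑ b, X b = 1) (c : ℝ) (h : c ≤ ∑ b, X b * p b) :
    ∃ b, X b ≠ 0 ∧ c ≤ p b := by
  classical
  set S := Finset.univ.filter (fun b => X b ≠ 0) with hS
  have hSne : S.Nonempty := by
    by_contra h'
    rw [Finset.not_nonempty_iff_eq_empty] at h'
    have : ∑ b, X b = 0 := by
      apply Finset.sum_eq_zero
      intro b _
      by_contra hb
      have : b ∈ S := by simp [hS, hb]
      simp [h'] at this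
    simp [this] at h1
  obtain ⟨b₀, hb₀S, hb₀⟩ := S.exists_max_image p hSne
  refine ⟨b₀, (Finset.mem_filter.mp hb₀S).2, le_trans h ?_⟩
  calc ∑ b, X b * p b ≤ ∑ b, X b * p b₀ := by
        apply Finset.sum_le_sum
        intro b _
        by_cases hb : X b = 0
        · simp [hb]
        · exact mul_le_mul_of_nonneg_left (hb₀ b (by simp [hS, hb])) (hX b)
    _ = p b₀ := by rw [← Finset.sum_mul, h1, one_mul]

open Classical in
/-- If two priors `X₀, X₁` on `{0,…,n}` are supported on `{0,…,θ₀}` and `{θ₁,…,n}`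
respectively, and a randomized mechanism `M` has output distributions
`Zᵢ(a) = ∑ b, Xᵢ(b) Pr[M(b) = a]` with `TVD(Z₀, Z₁) ≤ 1 - ε`, then some input `x`
in the support of `X₀` or `X₁` receives noise of magnitude `≥ (θ₁ - θ₀)/2` with
probability at least `ε/2`. -/
theorem mechanism_large_noise_of_indistinguishable
    (n θ₀ θ₁ : ℕ) (hn : 0 < n) (hθ : θ₀ < θ₁) (hθ₁ : θ₁ ≤ n)
    (ε : ℝ) (hε0 : 0 < ε) (hε1 : ε < 1)
    (X₀ X₁ : Fin (n + 1) → ℝ) (M : Fin (n + 1) → Fin (n + 1) → ℝ)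
    (hX₀0 : ∀ b, 0 ≤ X₀ b) (hX₁0 : ∀ b, 0 ≤ X₁ b)
    (hX₀1 : ∑ b, X₀ b = 1) (hX₁1 : ∑ b, X₁ b = 1)
    (hM0 : ∀ b a, 0 ≤ M b a) (hM1 : ∀ b, ∑ a, M b a = 1)
    (hsupp₀ : ∀ b, X₀ b ≠ 0 → (b : ℕ) ≤ θ₀)
    (hsupp₁ : ∀ b, X₁ b ≠ 0 → θ₁ ≤ (b : ℕ))
    (hTVD : (1 / 2) * ∑ a, |(∑ b, X₀ b * M b a) - ∑ b, X₁ b * M b a| ≤ 1 - ε) :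
    ∃ x : Fin (n + 1), (X₀ x ≠ 0 ∨ X₁ x ≠ 0) ∧
      ε / 2 ≤ ∑ a ∈ Finset.univ.filter
        (fun a : Fin (n + 1) => ((θ₁ : ℝ) - (θ₀ : ℝ)) / 2 ≤ |(a : ℝ) - (x : ℝ)|),
        M x a := by
  classical
  set Z₀ : Fin (n+1) → ℝ := fun a => ∑ b, X₀ b * M b a with hZ₀
  set Z₁ : Fin (n+1) → ℝ := fun a => ∑ b, X₁ b * M b a with hZ₁
  set A : Finset (Fin (n+1)) :=
    Finset.univ.filter (fun a => ((θ₀:ℝ)+(θ₁:ℝ))/2 ≤ (a:ℝ)) with hA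
  have hZ₀sum : ∑ a, Z₀ a = 1 := by
    simp only [hZ₀]
    rw [Finset.sum_comm]
    simp [← Finset.mul_sum, hM1, hX₀1]
  have hZ₁sum : ∑ a, Z₁ a = 1 := by
    simp only [hZ₁]
    rw [Finset.sum_comm]
    simp [← Finset.mul_sum, hM1, hX₁1]
  have hdsum : ∑ a ∈ A, (Z₁ a - Z₀ a) + ∑ a ∈ Aᶜ, (Z₁ a - Z₀ a) = 0 := by
    rw [Finset.sum_add_sum_compl]
    rw [Finset.sum_sub_distrib, hZ₀sum, hZ₁sum]
    ring
  have habs : ∑ a ∈ A, |Z₁ a - Z₀ a| + ∑ a ∈ Aᶜ, |Z₁ a - Z₀ a|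
      = ∑ a, |Z₀ a - Z₁ a| := by
    rw [Finset.sum_add_sum_compl]
    congr 1; ext a; rw [abs_sub_comm]
  have hkey : ∑ a ∈ A, Z₁ a - ∑ a ∈ A, Z₀ a ≤ 1 - ε := by
    have h1 : ∑ a ∈ A, (Z₁ a - Z₀ a) ≤ ∑ a ∈ A, |Z₁ a - Z₀ a| :=
      Finset.sum_le_sum (fun a _ => le_abs_self _)
    have h2 : -∑ a ∈ Aᶜ, (Z₁ a - Z₀ a) ≤ ∑ a ∈ Aᶜ, |Z₁ a - Z₀ a| := by
      rw [← Finset.sum_neg_distrib]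
      exact Finset.sum_le_sum (fun a _ => neg_le_abs _)
    have : 2 * ∑ a ∈ A, (Z₁ a - Z₀ a) ≤ ∑ a, |Z₀ a - Z₁ a| := by
      have := add_le_add h1 h2
      rw [habs] at this
      linarith [hdsum]
    rw [Finset.sum_sub_distrib] at this
    linarith
  have hZ₁A : ∑ a ∈ Aᶜ, Z₁ a = 1 - ∑ a ∈ A, Z₁ a := by
    have := Finset.sum_add_sum_compl A Z₁
    rw [hZ₁sum] at this
    linarith
  have hsplit : ε ≤ ∑ a ∈ A, Z₀ a + ∑ a ∈ Aᶜ, Z₁ a := by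
    rw [hZ₁A]; linarith
  have hcase : ε / 2 ≤ ∑ a ∈ A, Z₀ a ∨ ε / 2 ≤ ∑ a ∈ Aᶜ, Z₁ a := by
    by_contra h
    push_neg at h
    linarith [h.1, h.2]
  rcases hcase with hc | hc
  · -- case : Z₀(A) large
    have hswap : ∑ a ∈ A, Z₀ a = ∑ b, X₀ b * ∑ a ∈ A, M b a := by
      simp only [hZ₀]
      rw [Finset.sum_comm]
      simp [Finset.mul_sum]
    rw [hswap] at hc
    obtain ⟨x, hx, hxp⟩ := aux_exists_weighted X₀ (fun b => ∑ a ∈ A, M b a)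
      hX₀0 hX₀1 (ε/2) hc
    refine ⟨x, Or.inl hx, le_trans hxp ?_⟩
    apply Finset.sum_le_sum_of_subset_of_nonneg
    · intro a ha
      simp only [hA, Finset.mem_filter, Finset.mem_univ, true_and] at ha ⊢
      have hxθ : (x:ℝ) ≤ (θ₀:ℝ) := by exact_mod_cast hsupp₀ x hx
      have : ((θ₁:ℝ) - θ₀)/2 ≤ (a:ℝ) - (x:ℝ) := by linarith
      calc ((θ₁:ℝ) - θ₀)/2 ≤ (a:ℝ) - (x:ℝ) := this
        _ ≤ |(a:ℝ) - (x:ℝ)| := le_abs_self _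
    · intro a _ _; exact hM0 x a
  · -- case : Z₁(Aᶜ) large
    have hswap : ∑ a ∈ Aᶜ, Z₁ a = ∑ b, X₁ b * ∑ a ∈ Aᶜ, M b a := by
      simp only [hZ₁]
      rw [Finset.sum_comm]
      simp [Finset.mul_sum]
    rw [hswap] at hc
    obtain ⟨x, hx, hxp⟩ := aux_exists_weighted X₁ (fun b => ∑ a ∈ Aᶜ, M b a)
      hX₁0 hX₁1 (ε/2) hc
    refine ⟨x, Or.inr hx, le_trans hxp ?_⟩
    apply Finset.sum_le_sum_of_subset_of_nonneg
    · intro a ha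
      simp only [hA, Finset.mem_compl, Finset.mem_filter, Finset.mem_univ,
        true_and, not_le] at ha
      simp only [Finset.mem_filter, Finset.mem_univ, true_and]
      have hxθ : (θ₁:ℝ) ≤ (x:ℝ) := by exact_mod_cast hsupp₁ x hx
      have : ((θ₁:ℝ) - θ₀)/2 ≤ (x:ℝ) - (a:ℝ) := by linarith
      calc ((θ₁:ℝ) - θ₀)/2 ≤ (x:ℝ) - (a:ℝ) := this
        _ ≤ |(a:ℝ) - (x:ℝ)| := by rw [abs_sub_comm]; exact le_abs_self _
    · intro a _ _; exact hM0 x a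
end
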